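/- Let m ≥ 1 be an integer and let f ∈ X₁ be such that f(x) = 0 for m-a.e. x ∈ Ω₁ with τ₊(x) > m. Then U₁(t)f = 0 for every t > m. Consequently, the set of such functions (over all m ≥ 1) is a dense subspace of X₁ on which the semigroup (U₁(t))_{t≥0} is locally quasinilpotent, i.e. lim_{t→∞} exp( t^{−1} log ‖U₁(t)|f|‖ ) = 0 for every such f. -/

import Mathlib

open MeasureTheory Filter
open scoped ENNReal NNReal Topology

noncomputable section

/-- Abbreviation for the Euclidean space `ℝ^N`. -/
abbrev Euc (N : ℕ) : Type := EuclideanSpace ℝ (Fin N)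

/-- The backward exit time `τ₋(x)` from `Ω` along the flow `Φ`, with values in `[0,∞]`
(`sInf ∅ = ∞`). -/
def tauMinus {N : ℕ} (Ω : Set (Euc N)) (Φ : Euc N → ℝ → Euc N) (x : Euc N) : ℝ≥0∞ :=
  sInf {r : ℝ≥0∞ | ∃ s : ℝ, 0 < s ∧ r = ENNReal.ofReal s ∧ Φ x (-s) ∉ Ω}

/-- The forward exit time `τ₊(x)` from `Ω` along the flow `Φ`. -/
def tauPlus {N : ℕ} (Ω : Set (Euc N)) (Φ : Euc N → ℝ → Euc N) (x : Euc N) : ℝ≥0∞ :=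
  sInf {r : ℝ≥0∞ | ∃ s : ℝ, 0 < s ∧ r = ENNReal.ofReal s ∧ Φ x s ∉ Ω}

/-- The divergence of a vector field on `ℝ^N`. -/
def diverg {N : ℕ} (F : Euc N → Euc N) (x : Euc N) : ℝ :=
  ∑ i, (fderiv ℝ F x (EuclideanSpace.single i 1) : Fin N → ℝ) i

/-- A Lipschitz image of a Lebesgue-null subset of `ℝ^N` is null. -/
lemma euc_lipschitz_image_null {N : ℕ} {K : ℝ≥0} {g : Euc N → Euc N} (hg : LipschitzWith K g)
    {s : Set (Euc N)} (hs : volume s = 0) : volume (g '' s) = 0 := by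
  have hmp := EuclideanSpace.volume_preserving_symm_measurableEquiv_toLp (Fin N)
  set e := (MeasurableEquiv.toLp 2 (Fin N → ℝ)).symm with he
  set w := WithLp.equiv 2 (Fin N → ℝ) with hw
  have hew : ⇑e = ⇑w := rfl
  have hew' : ⇑e.symm = ⇑w.symm := rfl
  have hsymm : LipschitzWith ((Fintype.card (Fin N) : ℝ≥0) ^ ((1 : ℝ≥0∞) / 2).toReal) ⇑w.symm := by
    intro x y
    have h := PiLp.antilipschitzWith_ofLp 2 (fun _ : Fin N => ℝ) (w.symm x) (w.symm y)
    simpa [hw, Equiv.apply_symm_apply, WithLp.ofLp_toLp] using h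
  have hG : LipschitzWith (1 * (K * ((Fintype.card (Fin N) : ℝ≥0) ^ ((1 : ℝ≥0∞) / 2).toReal)))
      (fun v => w (g (w.symm v))) :=
    (PiLp.lipschitzWith_ofLp 2 (fun _ : Fin N => ℝ)).comp (hg.comp hsymm)
  set A := ⇑e.symm ⁻¹' s with hA
  have hA0 : volume A = 0 := by
    have hsub : A ⊆ ⇑e.symm ⁻¹' (toMeasurable volume s) :=
      Set.preimage_mono (subset_toMeasurable _ _)
    have hpre : volume (⇑e.symm ⁻¹' (toMeasurable volume s)) = volume (toMeasurable volume s) :=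
      (MeasurePreserving.symm e hmp).measure_preimage
        (measurableSet_toMeasurable _ _).nullMeasurableSet
    refine le_antisymm ?_ zero_le
    calc volume A ≤ volume (⇑e.symm ⁻¹' (toMeasurable volume s)) := measure_mono hsub
      _ = 0 := by rw [hpre, measure_toMeasurable, hs]
  have hGA : volume ((fun v => w (g (w.symm v))) '' A) = 0 := by
    have hd : (0 : ℝ) ≤ (Fintype.card (Fin N) : ℝ) := Nat.cast_nonneg _
    have hle := hG.hausdorffMeasure_image_le hd A
    rw [hausdorffMeasure_pi_real] at hle
    rw [hA0, mul_zero] at hle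
    exact le_antisymm hle zero_le
  have himg : g '' s = ⇑e ⁻¹' ((fun v => w (g (w.symm v))) '' A) := by
    ext z
    simp only [Set.mem_image, Set.mem_preimage, hew, hew', hA]
    constructor
    · rintro ⟨u, hu, rfl⟩
      exact ⟨w u, by simpa using hu, by simp⟩
    · rintro ⟨v, hv, hvz⟩
      refine ⟨w.symm v, hv, ?_⟩
      have := congrArg w.symm hvz
      simpa using this
  rw [himg, hmp.measure_preimage (NullMeasurableSet.of_null hGA)]
  exact hGA

variable {N : ℕ} {F : Euc N → Euc N} {κ : ℝ≥0} {Φ : Euc N → ℝ → Euc N}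

/-- The flow map is continuous in time. -/
lemma flow_continuous (hΦ : ∀ x t, HasDerivAt (Φ x) (F (Φ x t)) t) (x : Euc N) :
    Continuous (Φ x) :=
  continuous_iff_continuousAt.2 fun t => (hΦ x t).continuousAt

/-- Forward semigroup property of the flow. -/
lemma flow_add (hF : LipschitzWith κ F) (hΦ₀ : ∀ x, Φ x 0 = x)
    (hΦ : ∀ x t, HasDerivAt (Φ x) (F (Φ x t)) t) (x : Euc N) (a : ℝ) {s : ℝ} (hs : 0 ≤ s) :
    Φ x (a + s) = Φ (Φ x a) s := by
  have key : Set.EqOn (fun r => Φ x (a + r)) (Φ (Φ x a)) (Set.Icc 0 s) := by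
    apply ODE_solution_unique (v := fun _ z => F z) (fun _ => hF)
    · exact ((flow_continuous hΦ x).comp (continuous_const.add continuous_id)).continuousOn
    · intro r _
      have h1 : HasDerivAt (fun r : ℝ => a + r) 1 r := (hasDerivAt_id r).const_add a
      have h2 := HasDerivAt.scomp_of_eq r (hΦ x (a + r)) h1 rfl
      simp only [one_smul] at h2
      exact h2.hasDerivWithinAt
    · exact (flow_continuous hΦ (Φ x a)).continuousOn
    · exact fun r _ => (hΦ (Φ x a) r).hasDerivWithinAt
    · simp [hΦ₀]
  simpa using key (Set.right_mem_Icc.2 hs)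

/-- Grönwall: the flow maps are Lipschitz in the space variable, for nonnegative times. -/
lemma flow_dist (hF : LipschitzWith κ F) (hΦ₀ : ∀ x, Φ x 0 = x)
    (hΦ : ∀ x t, HasDerivAt (Φ x) (F (Φ x t)) t) (x y : Euc N) {t : ℝ} (ht : 0 ≤ t) :
    dist (Φ x t) (Φ y t) ≤ dist x y * Real.exp (κ * t) := by
  have h := dist_le_of_trajectories_ODE (v := fun _ z => F z) (a := 0) (b := t) (δ := dist x y)
    (fun _ => hF)
    (flow_continuous hΦ x).continuousOn (fun r _ => (hΦ x r).hasDerivWithinAt)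
    (flow_continuous hΦ y).continuousOn (fun r _ => (hΦ y r).hasDerivWithinAt)
    (le_of_eq (by rw [hΦ₀, hΦ₀])) t (Set.right_mem_Icc.2 ht)
  simpa using h

set_option maxHeartbeats 2000000 in
/-- If `f ∈ X₁` vanishes a.e. on `{τ₊ > m}` then `U₁(t)f = 0` for every
`t > m`; consequently the set of all such functions (over all `m ≥ 1`) is dense in `X₁`,
and on it the semigroup is locally quasinilpotent:
`‖U₁(t)|f|‖^{1/t} → 0` as `t → ∞`. -/
theorem U1_local_quasinilpotence
    {N : ℕ} (Ω : Set (Euc N)) (hΩ : IsOpen Ω)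
    -- `F` is globally Lipschitz with constant `κ > 0`, with divergence bounded on `Ω`
    (F : Euc N → Euc N) (κ : ℝ≥0) (hκ : 0 < κ) (hF : LipschitzWith κ F)
    (hdivb : ∃ C, ∀ x ∈ Ω, |diverg F x| ≤ C)
    -- `h` is measurable and bounded below on `Ω`
    (h : Euc N → ℝ) (hh : Measurable h) (hhb : ∃ c, ∀ x ∈ Ω, c ≤ h x)
    -- `Φ` is the global flow of `F`
    (Φ : Euc N → ℝ → Euc N) (hΦ₀ : ∀ x, Φ x 0 = x)
    (hΦ : ∀ x t, HasDerivAt (Φ x) (F (Φ x t)) t)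
    -- `ν = h + div F`
    (ν : Euc N → ℝ) (hν : ν = fun x => h x + diverg F x)
    -- the exponent `1 ≤ p < ∞`
    (p : ℝ≥0∞) [Fact (1 ≤ p)] (hp : p ≠ ∞)
    (Ω₁ : Set (Euc N)) (hΩ₁ : Ω₁ = {x ∈ Ω | tauPlus Ω Φ x < ∞})
    -- the restriction `U₁(t)` of `U(t)` to `X₁ ≃ L^p(Ω₁)` (real valued)
    (U₁ : ℝ → (Lp ℝ p (volume.restrict Ω₁) →L[ℝ] Lp ℝ p (volume.restrict Ω₁)))
    (hU₁ : ∀ t, 0 ≤ t → ∀ f : Lp ℝ p (volume.restrict Ω₁),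
      ⇑(U₁ t f) =ᵐ[volume.restrict Ω₁] fun x =>
        if ENNReal.ofReal t < tauMinus Ω Φ x then
          Real.exp (-∫ s in (0:ℝ)..t, ν (Φ x (-s))) * f (Φ x (-t))
        else 0) :
    -- vanishing of `U₁(t)f` for `t > m`
    (∀ m : ℕ, 1 ≤ m → ∀ f : Lp ℝ p (volume.restrict Ω₁),
      (∀ᵐ x ∂(volume.restrict Ω₁), ENNReal.ofReal (m : ℝ) < tauPlus Ω Φ x → f x = 0) →
      ∀ t : ℝ, (m : ℝ) < t → U₁ t f = 0) ∧
    -- density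
    Dense {f : Lp ℝ p (volume.restrict Ω₁) | ∃ m : ℕ, 1 ≤ m ∧
      ∀ᵐ x ∂(volume.restrict Ω₁), ENNReal.ofReal (m : ℝ) < tauPlus Ω Φ x → f x = 0} ∧
    -- local quasinilpotence on this set
    (∀ f : Lp ℝ p (volume.restrict Ω₁), (∃ m : ℕ, 1 ≤ m ∧
        (∀ᵐ x ∂(volume.restrict Ω₁), ENNReal.ofReal (m : ℝ) < tauPlus Ω Φ x → f x = 0)) →
      Tendsto (fun t : ℝ => ‖U₁ t |f|‖ ^ t⁻¹) atTop (nhds 0)) := by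
  have hp0 : p ≠ 0 := (lt_of_lt_of_le zero_lt_one (Fact.out : 1 ≤ p)).ne'
  have hptoReal : 0 < p.toReal := ENNReal.toReal_pos hp0 hp
  have hΩ₁Ω : Ω₁ ⊆ Ω := by rw [hΩ₁]; exact fun x hx => hx.1
  -- the sets of points whose forward trajectory stays in `Ω` up to time `a`
  set J : ℝ → Set (Euc N) := fun a => {x | ∀ s ∈ Set.Icc (0:ℝ) a, Φ x s ∈ Ω} with hJdef
  have hJopen : ∀ a : ℝ, IsOpen (J a) := by
    intro a
    rcases lt_or_ge a 0 with ha | ha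
    · have huniv : J a = Set.univ := by
        apply Set.eq_univ_of_forall
        intro x s hs
        rw [Set.Icc_eq_empty (not_le.2 ha)] at hs
        exact absurd hs (Set.notMem_empty s)
      rw [huniv]; exact isOpen_univ
    · rw [Metric.isOpen_iff]
      intro x₀ hx₀
      have hK : IsCompact (Φ x₀ '' Set.Icc 0 a) := isCompact_Icc.image (flow_continuous hΦ x₀)
      have hKΩ : Φ x₀ '' Set.Icc 0 a ⊆ Ω := by rintro _ ⟨s, hs, rfl⟩; exact hx₀ s hs
      obtain ⟨δ, hδ, hth⟩ := hK.exists_thickening_subset_open hΩ hKΩ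
      refine ⟨δ / Real.exp (κ * a), by positivity, ?_⟩
      intro x hx s hs
      apply hth
      rw [Metric.mem_thickening_iff]
      refine ⟨Φ x₀ s, ⟨s, hs, rfl⟩, ?_⟩
      have hd := flow_dist hF hΦ₀ hΦ x x₀ hs.1
      have h1 : Real.exp ((κ:ℝ) * s) ≤ Real.exp ((κ:ℝ) * a) :=
        Real.exp_le_exp.2 (mul_le_mul_of_nonneg_left hs.2 κ.coe_nonneg)
      have hxb : dist x x₀ < δ / Real.exp ((κ:ℝ) * a) := Metric.mem_ball.1 hx
      calc dist (Φ x s) (Φ x₀ s) ≤ dist x x₀ * Real.exp ((κ:ℝ) * s) := hd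
        _ ≤ dist x x₀ * Real.exp ((κ:ℝ) * a) := mul_le_mul_of_nonneg_left h1 dist_nonneg
        _ < δ := (lt_div_iff₀ (Real.exp_pos _)).1 hxb
  -- points that stay in `Ω` backward up to time `t`
  have hback : ∀ (x : Euc N) (t : ℝ), ENNReal.ofReal t < tauMinus Ω Φ x →
      ∀ s : ℝ, 0 < s → s ≤ t → Φ x (-s) ∈ Ω := by
    intro x t hlt s hs0 hst
    by_contra hc
    have hle : tauMinus Ω Φ x ≤ ENNReal.ofReal s := sInf_le ⟨s, hs0, rfl, hc⟩
    exact absurd (lt_of_le_of_lt (hle.trans (ENNReal.ofReal_le_ofReal hst)) hlt) (lt_irrefl _)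
  -- characterization of `τ₊ > b` in terms of the open sets `J a`
  have hchar : ∀ x : Euc N, x ∈ Ω → ∀ b : ℝ, 0 ≤ b →
      (ENNReal.ofReal b < tauPlus Ω Φ x ↔ ∃ a : ℝ, b < a ∧ x ∈ J a) := by
    intro x hxΩ b hb
    constructor
    · intro hlt
      rcases eq_or_ne (tauPlus Ω Φ x) ⊤ with htop | htop
      · refine ⟨b + 1, by linarith, ?_⟩
        intro s hs
        rcases eq_or_lt_of_le hs.1 with h0 | h0
        · rw [← h0, hΦ₀]; exact hxΩ
        · by_contra hc
          have hle : tauPlus Ω Φ x ≤ ENNReal.ofReal s := sInf_le ⟨s, h0, rfl, hc⟩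
          rw [htop, top_le_iff] at hle
          exact ENNReal.ofReal_ne_top hle
      · obtain ⟨r, hr0, hbr, hrτ⟩ := ENNReal.lt_iff_exists_real_btwn.1 hlt
        refine ⟨r, ?_, ?_⟩
        · by_contra hc
          push_neg at hc
          exact absurd (ENNReal.ofReal_le_ofReal hc) (not_le.2 hbr)
        · intro s hs
          rcases eq_or_lt_of_le hs.1 with h0 | h0
          · rw [← h0, hΦ₀]; exact hxΩ
          · by_contra hc
            have hle : tauPlus Ω Φ x ≤ ENNReal.ofReal s := sInf_le ⟨s, h0, rfl, hc⟩
            exact absurd hrτ (not_lt.2 (hle.trans (ENNReal.ofReal_le_ofReal hs.2)))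
    · rintro ⟨a, hba, hxa⟩
      have h1 : ENNReal.ofReal a ≤ tauPlus Ω Φ x := by
        apply le_sInf
        rintro r ⟨s, hs0, rfl, hsΩ⟩
        apply ENNReal.ofReal_le_ofReal
        by_contra hc
        push_neg at hc
        exact hsΩ (hxa s ⟨hs0.le, hc.le⟩)
      exact lt_of_lt_of_le ((ENNReal.ofReal_lt_ofReal_iff (by linarith)).2 hba) h1
  set E : ℝ → Set (Euc N) := fun b => Ω ∩ ⋃ (a : ℝ) (_ : b < a), J a with hEdef
  have hEopen : ∀ b, IsOpen (E b) := fun b =>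
    hΩ.inter (isOpen_iUnion fun a => isOpen_iUnion fun _ => hJopen a)
  have hEchar : ∀ x : Euc N, x ∈ Ω → ∀ b : ℝ, 0 ≤ b →
      (x ∈ E b ↔ ENNReal.ofReal b < tauPlus Ω Φ x) := by
    intro x hxΩ b hb
    rw [hchar x hxΩ b hb]
    constructor
    · rintro ⟨-, hu⟩
      simpa using hu
    · intro hex
      exact ⟨hxΩ, by simpa using hex⟩
  have hΩ₁eq : Ω₁ = Ω \ ⋂ (n : ℕ), E n := by
    rw [hΩ₁]
    ext x
    simp only [Set.mem_setOf_eq, Set.mem_diff, Set.mem_iInter]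
    constructor
    · rintro ⟨hxΩ, hfin⟩
      refine ⟨hxΩ, fun hall => ?_⟩
      obtain ⟨n, hn⟩ := ENNReal.exists_nat_gt hfin.ne
      have h2 := (hEchar x hxΩ n (Nat.cast_nonneg n)).1 (hall n)
      rw [← ENNReal.ofReal_natCast n] at hn
      exact absurd h2 (not_lt.2 hn.le)
    · rintro ⟨hxΩ, hnall⟩
      refine ⟨hxΩ, ?_⟩
      rcases eq_or_ne (tauPlus Ω Φ x) ⊤ with htop | htop
      · exfalso
        apply hnall
        intro n
        apply (hEchar x hxΩ n (Nat.cast_nonneg n)).2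
        rw [htop]
        exact ENNReal.ofReal_lt_top
      · exact lt_top_iff_ne_top.2 htop
  have hΩ₁meas : MeasurableSet Ω₁ := by
    rw [hΩ₁eq]
    exact hΩ.measurableSet.diff (MeasurableSet.iInter fun n => (hEopen _).measurableSet)
  -- Part 1
  have part1 : ∀ m : ℕ, 1 ≤ m → ∀ f : Lp ℝ p (volume.restrict Ω₁),
      (∀ᵐ x ∂(volume.restrict Ω₁), ENNReal.ofReal (m : ℝ) < tauPlus Ω Φ x → f x = 0) →
      ∀ t : ℝ, (m : ℝ) < t → U₁ t f = 0 := by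
    intro m hm f hf t hmt
    have hm1 : (1:ℝ) ≤ (m:ℝ) := by exact_mod_cast hm
    have ht0 : (0:ℝ) < t := by linarith
    set D := {x : Euc N | ¬ (ENNReal.ofReal (m : ℝ) < tauPlus Ω Φ x → f x = 0)} with hDdef
    have hD0 : (volume.restrict Ω₁) D = 0 := ae_iff.1 hf
    have hS0 : volume (toMeasurable (volume.restrict Ω₁) D ∩ Ω₁) = 0 := by
      have hSm : (volume.restrict Ω₁) (toMeasurable (volume.restrict Ω₁) D) = 0 := by rw [measure_toMeasurable]; exact hD0
      rwa [Measure.restrict_apply (measurableSet_toMeasurable (volume.restrict Ω₁) D)] at hSm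
    have hLip : LipschitzWith (Real.exp (κ * t)).toNNReal (fun z : Euc N => Φ z t) := by
      apply LipschitzWith.of_dist_le_mul
      intro a b
      rw [Real.coe_toNNReal _ (Real.exp_pos _).le, mul_comm]
      exact flow_dist hF hΦ₀ hΦ a b ht0.le
    have hT0 : volume ((fun z : Euc N => Φ z t) '' (toMeasurable (volume.restrict Ω₁) D ∩ Ω₁)) = 0 :=
      euc_lipschitz_image_null hLip hS0
    have hμT : (volume.restrict Ω₁) ((fun z : Euc N => Φ z t) '' (toMeasurable (volume.restrict Ω₁) D ∩ Ω₁)) = 0 :=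
      le_antisymm (le_trans (Measure.le_iff'.1 Measure.restrict_le_self _) hT0.le) zero_le
    have key : ∀ᵐ x ∂(volume.restrict Ω₁), (if ENNReal.ofReal t < tauMinus Ω Φ x then
        Real.exp (-∫ s in (0:ℝ)..t, ν (Φ x (-s))) * f (Φ x (-t)) else 0) = 0 := by
      filter_upwards [ae_restrict_mem hΩ₁meas, measure_eq_zero_iff_ae_notMem.1 hμT] with x hx₁ hxT
      split_ifs with hlt
      · have hyΩ : Φ x (-t) ∈ Ω := hback x t hlt t ht0 le_rfl
        have hgroup : ∀ s : ℝ, 0 ≤ s → Φ (Φ x (-t)) s = Φ x (-t + s) :=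
          fun s hs => (flow_add hF hΦ₀ hΦ x (-t) hs).symm
        have hyx : Φ (Φ x (-t)) t = x := by
          rw [hgroup t ht0.le, neg_add_cancel, hΦ₀]
        have hτlow : ENNReal.ofReal t ≤ tauPlus Ω Φ (Φ x (-t)) := by
          apply le_sInf
          rintro r ⟨s, hs0, rfl, hsΩ⟩
          apply ENNReal.ofReal_le_ofReal
          by_contra hc
          push_neg at hc
          apply hsΩ
          rw [hgroup s hs0.le]
          have hst : -t + s = -(t - s) := by ring
          rw [hst]
          exact hback x t hlt (t - s) (by linarith) (by linarith)
        have hτm : ENNReal.ofReal (m:ℝ) < tauPlus Ω Φ (Φ x (-t)) :=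
          lt_of_lt_of_le ((ENNReal.ofReal_lt_ofReal_iff ht0).2 hmt) hτlow
        have hxfin : tauPlus Ω Φ x < ⊤ := by
          rw [hΩ₁] at hx₁; exact hx₁.2
        have hyfin : tauPlus Ω Φ (Φ x (-t)) < ⊤ := by
          obtain ⟨s₀, hs₀pos, hs₀⟩ : ∃ s₀ : ℝ, 0 < s₀ ∧ Φ x s₀ ∉ Ω := by
            by_contra hc
            push_neg at hc
            have hempty : {r : ℝ≥0∞ | ∃ s : ℝ, 0 < s ∧ r = ENNReal.ofReal s ∧ Φ x s ∉ Ω} = ∅ := by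
              apply Set.eq_empty_iff_forall_notMem.2
              rintro r ⟨s, hs0, rfl, hsΩ⟩
              exact hsΩ (hc s hs0)
            rw [tauPlus, hempty, sInf_empty] at hxfin
            exact absurd hxfin (lt_irrefl _)
          have hnot : Φ (Φ x (-t)) (t + s₀) ∉ Ω := by
            rw [hgroup (t + s₀) (by linarith)]
            have hts : -t + (t + s₀) = s₀ := by ring
            rw [hts]; exact hs₀
          exact lt_of_le_of_lt (sInf_le ⟨t + s₀, by linarith, rfl, hnot⟩) ENNReal.ofReal_lt_top
        have hyΩ₁ : Φ x (-t) ∈ Ω₁ := by rw [hΩ₁]; exact ⟨hyΩ, hyfin⟩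
        have hfy : f (Φ x (-t)) = 0 := by
          by_contra hfy
          apply hxT
          refine ⟨Φ x (-t), ⟨subset_toMeasurable (volume.restrict Ω₁) D ?_, hyΩ₁⟩, hyx⟩
          exact fun himp => hfy (himp hτm)
        rw [hfy, mul_zero]
      · rfl
    apply Lp.ext
    refine (hU₁ t ht0.le f).trans ?_
    filter_upwards [key, Lp.coeFn_zero ℝ p (volume.restrict Ω₁)] with x h1 h2
    rw [h1, h2]
    rfl
  -- Part 2 : density
  have part2 : Dense {f : Lp ℝ p (volume.restrict Ω₁) | ∃ m : ℕ, 1 ≤ m ∧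
      ∀ᵐ x ∂(volume.restrict Ω₁), ENNReal.ofReal (m : ℝ) < tauPlus Ω Φ x → f x = 0} := by
    intro f
    have hgmem : ∀ n : ℕ, MemLp (Set.indicator (E ((n:ℝ)+1))ᶜ ⇑f) p (volume.restrict Ω₁) :=
      fun n => (Lp.memLp f).indicator (hEopen ((n:ℝ)+1)).measurableSet.compl
    have hmem : ∀ n : ℕ, MemLp.toLp _ (hgmem n) ∈ {f : Lp ℝ p (volume.restrict Ω₁) | ∃ m : ℕ, 1 ≤ m ∧
        ∀ᵐ x ∂(volume.restrict Ω₁), ENNReal.ofReal (m : ℝ) < tauPlus Ω Φ x → f x = 0} := by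
      intro n
      refine ⟨n + 1, Nat.succ_le_succ (Nat.zero_le n), ?_⟩
      filter_upwards [MemLp.coeFn_toLp (hgmem n), ae_restrict_mem hΩ₁meas] with x hx hxΩ₁ hτ
      rw [hx]
      apply Set.indicator_of_notMem
      rw [Set.notMem_compl_iff]
      apply (hEchar x (hΩ₁Ω hxΩ₁) ((n:ℝ)+1) (by positivity)).2
      have hcast : ((n+1 : ℕ) : ℝ) = (n:ℝ)+1 := by push_cast; ring
      rwa [hcast] at hτ
    have hdist : ∀ n : ℕ, dist (MemLp.toLp _ (hgmem n)) f
        = (eLpNorm (Set.indicator (E ((n:ℝ)+1)) ⇑f) p (volume.restrict Ω₁)).toReal := by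
      intro n
      rw [Lp.dist_def, ← eLpNorm_neg]
      congr 1
      apply eLpNorm_congr_ae
      filter_upwards [MemLp.coeFn_toLp (hgmem n)] with x hx
      simp only [Pi.sub_apply, Pi.neg_apply, hx]
      by_cases hxE : x ∈ E ((n:ℝ)+1)
      · rw [Set.indicator_of_notMem (by simpa using hxE), Set.indicator_of_mem hxE]
        ring
      · rw [Set.indicator_of_mem (Set.mem_compl hxE), Set.indicator_of_notMem hxE]
        ring
    have hDCT : Tendsto (fun n : ℕ =>
        ∫⁻ x, (‖Set.indicator (E ((n:ℝ)+1)) ⇑f x‖₊ : ℝ≥0∞) ^ p.toReal ∂(volume.restrict Ω₁)) atTop (𝓝 0) := by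
      have h0 : (0:ℝ≥0∞) = ∫⁻ _x, 0 ∂(volume.restrict Ω₁) := lintegral_zero.symm
      rw [h0]
      apply tendsto_lintegral_of_dominated_convergence' (fun x => (‖f x‖₊ : ℝ≥0∞) ^ p.toReal)
      · intro n
        exact ENNReal.continuous_rpow_const.measurable.comp_aemeasurable
          ((Lp.aestronglyMeasurable f).indicator (hEopen ((n:ℝ)+1)).measurableSet).enorm
      · intro n
        apply Filter.Eventually.of_forall
        intro x
        apply ENNReal.rpow_le_rpow _ hptoReal.le
        simp only [ENNReal.coe_le_coe]
        by_cases hxE : x ∈ E ((n:ℝ)+1)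
        · rw [Set.indicator_of_mem hxE]
        · rw [Set.indicator_of_notMem hxE]; simp
      · exact (lintegral_rpow_enorm_lt_top_of_eLpNorm_lt_top hp0 hp (Lp.eLpNorm_lt_top f)).ne
      · filter_upwards [ae_restrict_mem hΩ₁meas] with x hx
        have hxfin : tauPlus Ω Φ x < ⊤ := by rw [hΩ₁] at hx; exact hx.2
        obtain ⟨n₀, hn₀⟩ := ENNReal.exists_nat_gt hxfin.ne
        refine Tendsto.congr' ?_ (tendsto_const_nhds)
        rw [EventuallyEq, eventually_atTop]
        refine ⟨n₀, fun n hn => ?_⟩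
        have hxE : x ∉ E ((n:ℝ)+1) := by
          intro hxE
          have h2 := (hEchar x (hΩ₁Ω hx) ((n:ℝ)+1) (by positivity)).1 hxE
          have h3 : ((n₀:ℕ) : ℝ≥0∞) ≤ ENNReal.ofReal ((n:ℝ)+1) := by
            rw [← ENNReal.ofReal_natCast]
            apply ENNReal.ofReal_le_ofReal
            have hnn : (n₀:ℝ) ≤ (n:ℝ) := by exact_mod_cast hn
            linarith
          exact absurd (lt_of_lt_of_le hn₀ (h3.trans h2.le)) (lt_irrefl _)
        rw [Set.indicator_of_notMem hxE]
        simp [ENNReal.zero_rpow_of_pos hptoReal]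
    have hEN : Tendsto (fun n : ℕ => eLpNorm (Set.indicator (E ((n:ℝ)+1)) ⇑f) p (volume.restrict Ω₁))
        atTop (𝓝 0) := by
      have h1 := hDCT.ennrpow_const (1 / p.toReal)
      rw [ENNReal.zero_rpow_of_pos (by positivity)] at h1
      apply h1.congr
      intro n
      exact (eLpNorm_eq_lintegral_rpow_enorm_toReal (f := Set.indicator (E ((n:ℝ)+1)) ⇑f) hp0 hp).symm
    have htend : Tendsto (fun n : ℕ => MemLp.toLp _ (hgmem n)) atTop (𝓝 f) := by
      rw [tendsto_iff_dist_tendsto_zero]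
      have h2 := (ENNReal.tendsto_toReal (a := 0) (by simp)).comp hEN
      simp only [Function.comp_def, ENNReal.toReal_zero] at h2
      exact h2.congr fun n => (hdist n).symm
    exact mem_closure_of_tendsto htend (Filter.Eventually.of_forall hmem)
  -- Part 3
  refine ⟨part1, part2, ?_⟩
  rintro f ⟨m, hm, hf⟩
  have habs : ∀ᵐ x ∂(volume.restrict Ω₁), ENNReal.ofReal (m : ℝ) < tauPlus Ω Φ x → |f| x = 0 := by
    filter_upwards [hf, Lp.coeFn_abs f] with x hx hx2 hτ
    rw [hx2, hx hτ, abs_zero]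
  have hm1 : (1:ℝ) ≤ (m:ℝ) := by exact_mod_cast hm
  refine Tendsto.congr' ?_ (tendsto_const_nhds)
  rw [EventuallyEq, eventually_atTop]
  refine ⟨(m:ℝ) + 1, fun t ht => ?_⟩
  rw [part1 m hm |f| habs t (by linarith), norm_zero,
    Real.zero_rpow (inv_ne_zero (ne_of_gt (by linarith : (0:ℝ) < t)))]
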